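/- arXiv:1909.12898 — 2 statements merged into one kernel-verified Lean document; each statement's English description precedes it below -/
import Mathlib

section
/- For any y ∈ ℝ^d, the Euclidean projection of y onto the probability simplex Δ_d = {x ∈ ℝ^d : x ≥ 0, Σᵢ xᵢ = 1} has the form (y − b̄·1)_+ for some unique scalar b̄ ∈ ℝ satisfying Σᵢ max(yᵢ − b̄, 0) = 1. -/
open BigOperators

/-- Euclidean distance on `Fin d → ℝ`. -/
noncomputable def edist2 {d : ℕ} (x y : Fin d → ℝ) : ℝ :=
  Real.sqrt (∑ i, (x i - y i) ^ 2)

/-- The probability simplex in `ℝ^d`. -/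
def simplex (d : ℕ) : Set (Fin d → ℝ) :=
  {x | (∀ i, 0 ≤ x i) ∧ ∑ i, x i = 1}

lemma strict_anti_aux {d : ℕ} (y : Fin d → ℝ) {b1 b2 : ℝ} (h : b1 < b2)
    (hpos : 1 ≤ ∑ i, max (y i - b2) 0) :
    ∑ i, max (y i - b2) 0 < ∑ i, max (y i - b1) 0 := by
  have hex : ∃ i, 0 < max (y i - b2) 0 := by
    by_contra hc
    push_neg at hc
    have : ∑ i, max (y i - b2) 0 ≤ 0 := Finset.sum_nonpos (fun i _ => hc i)
    linarith
  obtain ⟨i0, hi0⟩ := hex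
  apply Finset.sum_lt_sum
  · intro i _
    exact max_le_max (by linarith) le_rfl
  · refine ⟨i0, Finset.mem_univ i0, ?_⟩
    have h2 : 0 < y i0 - b2 := by
      by_contra hc
      push_neg at hc
      rw [max_eq_right hc] at hi0
      exact lt_irrefl 0 hi0
    rw [max_eq_left (le_of_lt h2)]
    calc y i0 - b2 < y i0 - b1 := by linarith
    _ ≤ max (y i0 - b1) 0 := le_max_left _ _

theorem simplex_projection_form
    {d : ℕ} (hd : 0 < d) (y : Fin d → ℝ) :
    ∃! b : ℝ, (∑ i, max (y i - b) 0 = 1) ∧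
      (fun i => max (y i - b) 0) ∈ simplex d ∧
      ∀ x ∈ simplex d, edist2 (fun i => max (y i - b) 0) y ≤ edist2 x y := by
  have hne : Nonempty (Fin d) := ⟨⟨0, hd⟩⟩
  have hcont : Continuous (fun b : ℝ => ∑ i, max (y i - b) 0) := by
    apply continuous_finset_sum
    intro i _
    exact (continuous_const.sub continuous_id).max continuous_const
  have huniv : (Finset.univ : Finset (Fin d)).Nonempty := Finset.univ_nonempty
  set M : ℝ := Finset.univ.sup' huniv y with hM
  have hfM : ∑ i, max (y i - M) 0 = 0 := Finset.sum_eq_zero (fun i _ => max_eq_right (by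
    have : y i ≤ M := Finset.le_sup' y (Finset.mem_univ i)
    linarith))
  obtain ⟨i0⟩ := hne
  have ha : y i0 - 1 ≤ M := by
    have : y i0 ≤ M := Finset.le_sup' y (Finset.mem_univ i0)
    linarith
  have hfa : 1 ≤ ∑ i, max (y i - (y i0 - 1)) 0 := by
    have h1 : max (y i0 - (y i0 - 1)) 0 = 1 := by norm_num
    calc (1:ℝ) = max (y i0 - (y i0 - 1)) 0 := h1.symm
    _ ≤ ∑ i, max (y i - (y i0 - 1)) 0 :=
      Finset.single_le_sum (f := fun i => max (y i - (y i0 - 1)) 0)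
        (fun i _ => le_max_right _ _) (Finset.mem_univ i0)
  have hmem : (1:ℝ) ∈ Set.Icc (∑ i, max (y i - M) 0) (∑ i, max (y i - (y i0 - 1)) 0) :=
    ⟨by rw [hfM]; norm_num, hfa⟩
  obtain ⟨b, _, hb1⟩ := intermediate_value_Icc' ha hcont.continuousOn hmem
  -- hb1 : ∑ i, max (y i - b) 0 = 1
  refine ⟨b, ⟨hb1, ⟨fun i => le_max_right _ _, hb1⟩, ?_⟩, ?_⟩
  · -- optimality
    intro x hx
    obtain ⟨hx0, hx1⟩ := hx
    set p : Fin d → ℝ := fun i => max (y i - b) 0 with hp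
    set s : Fin d → ℝ := fun i => max (b - y i) 0 with hs
    have key : ∀ i, (x i - y i)^2
        = (p i - y i)^2 + (x i - p i)^2 + 2*(s i * x i) - 2*b*(x i) + 2*b*(p i) := by
      intro i
      rcases le_or_gt (y i) b with h | h
      · have hp0 : p i = 0 := max_eq_right (by simp; linarith)
        have hs0 : s i = b - y i := max_eq_left (by linarith)
        rw [hp0, hs0]; ring
      · have hp0 : p i = y i - b := max_eq_left (by simp; linarith)
        have hs0 : s i = 0 := max_eq_right (by linarith)
        rw [hp0, hs0]; ring
    have hsum : ∑ i, (x i - y i)^2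
        = ∑ i, (p i - y i)^2 + ∑ i, (x i - p i)^2 + 2*(∑ i, s i * x i)
          - 2*b*(∑ i, x i) + 2*b*(∑ i, p i) := by
      calc ∑ i, (x i - y i)^2
          = ∑ i, ((p i - y i)^2 + (x i - p i)^2 + 2*(s i * x i) - 2*b*(x i) + 2*b*(p i)) :=
            Finset.sum_congr rfl (fun i _ => key i)
      _ = _ := by
        simp only [Finset.sum_add_distrib, Finset.sum_sub_distrib, ← Finset.mul_sum]
    have hsp : ∑ i, p i = 1 := hb1
    have hle : ∑ i, (p i - y i)^2 ≤ ∑ i, (x i - y i)^2 := by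
      rw [hsum, hx1, hsp]
      have h1 : 0 ≤ ∑ i, (x i - p i)^2 := Finset.sum_nonneg (fun i _ => sq_nonneg _)
      have h2 : 0 ≤ ∑ i, s i * x i :=
        Finset.sum_nonneg (fun i _ => mul_nonneg (le_max_right _ _) (hx0 i))
      linarith
    exact Real.sqrt_le_sqrt hle
  · -- uniqueness
    intro b' hb'
    have hb'1 : ∑ i, max (y i - b') 0 = 1 := hb'.1
    rcases lt_trichotomy b' b with h | h | h
    · exfalso
      have hlt := strict_anti_aux y h hb1.ge
      have : (1:ℝ) < 1 := by
        calc (1:ℝ) = ∑ i, max (y i - b) 0 := hb1.symm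
        _ < ∑ i, max (y i - b') 0 := hlt
        _ = 1 := hb'1
      exact lt_irrefl 1 this
    · exact h
    · exfalso
      have hlt := strict_anti_aux y h hb'1.ge
      have : (1:ℝ) < 1 := by
        calc (1:ℝ) = ∑ i, max (y i - b') 0 := hb'1.symm
        _ < ∑ i, max (y i - b) 0 := hlt
        _ = 1 := hb1
      exact lt_irrefl 1 this
end

section
/- Let y ∈ ℝ^d and suppose b̄ ∈ ℝ satisfies Σᵢ max(yᵢ − b̄, 0) = 1. Then x* = (y − b̄·1)_+ is the Euclidean projection of y onto the simplex Δ_d, i.e., for all x ∈ Δ_d, ‖x* − y‖₂ ≤ ‖x − y‖₂. -/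
open BigOperators

theorem thresholded_point_is_projection
    {d : ℕ} (y : Fin d → ℝ) (b : ℝ)
    (hb : ∑ i, max (y i - b) 0 = 1) :
    ∀ x ∈ simplex d, edist2 (fun i => max (y i - b) 0) y ≤ edist2 x y := by
  intro x hx
  obtain ⟨hpos, hsum⟩ := hx
  set p : Fin d → ℝ := fun i => max (y i - b) 0 with hp
  apply Real.sqrt_le_sqrt
  -- key inner product inequality
  have key : ∀ i, -b * (x i - p i) ≤ (x i - p i) * (p i - y i) := by
    intro i
    by_cases h : y i - b ≤ 0
    · have hpi : p i = 0 := by simp [hp, max_eq_right h]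
      rw [hpi]
      have : -b ≤ -y i := by linarith
      have := mul_le_mul_of_nonneg_left this (hpos i)
      nlinarith
    · have hpi : p i = y i - b := by simp [hp, max_eq_left (le_of_lt (lt_of_not_ge h))]
      rw [hpi]; ring_nf; nlinarith
  have hsumkey : (0:ℝ) ≤ ∑ i, (x i - p i) * (p i - y i) := by
    calc (0:ℝ) = ∑ i, -b * (x i - p i) := by
          rw [← Finset.mul_sum, Finset.sum_sub_distrib, hsum, hp, hb]; ring
      _ ≤ _ := Finset.sum_le_sum fun i _ => key i
  have expand : ∑ i, (x i - y i) ^ 2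
      = ∑ i, (p i - y i) ^ 2 + ∑ i, (x i - p i) ^ 2
        + 2 * ∑ i, (x i - p i) * (p i - y i) := by
    rw [Finset.mul_sum, ← Finset.sum_add_distrib, ← Finset.sum_add_distrib]
    exact Finset.sum_congr rfl fun i _ => by ring
  have hsq : (0:ℝ) ≤ ∑ i, (x i - p i) ^ 2 :=
    Finset.sum_nonneg fun i _ => sq_nonneg _
  linarith
end
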